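/- (Theorem 1) Let L̂ ∈ ℝ^{n×n}, H ∈ ℝ^{n×d}, P ∈ ℝ^{d×d'} be real matrices with n ≥ 1, K a natural number, e ∈ ℝ^n, δ ∈ ℝ^d, and u ∈ ℝ^{d'}. Let l = uᵀ s(H) be the classification score, where s(H) = (1/n) Σ_{i=1}^n (L̂^K H P)_i, and let Δl = ((𝟏ᵀ L̂^K e) · (δᵀ P u)) / n be its change under the single-node perturbation H' = H + e δᵀ. Assume 𝟏ᵀ L̂^K e > 0 and ‖P u‖₂ > 0. If the perturbation flips the prediction with larger magnitude, i.e., |Δl| > |l|, then necessarily ‖δ‖₂ > n · |l| / ((𝟏ᵀ L̂^K e) · ‖P u‖₂). -/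
import Mathlib


open Matrix

/-- Theorem 1: if the single-node perturbation `H' = H + e δᵀ` flips the
prediction with larger magnitude, i.e. `|Δl| > |l|` where `l = uᵀ s(H)` and
`Δl = ((𝟏ᵀ L̂^K e)(δᵀ P u)) / n`, and `𝟏ᵀ L̂^K e > 0`, `‖P u‖₂ > 0`,
then necessarily `‖δ‖₂ > n |l| / ((𝟏ᵀ L̂^K e) ‖P u‖₂)`. -/
theorem gcn_discriminative_norm_bound
    {n d d' : ℕ} (hn : 1 ≤ n) (L : Matrix (Fin n) (Fin n) ℝ)
    (H : Matrix (Fin n) (Fin d) ℝ) (P : Matrix (Fin d) (Fin d') ℝ)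
    (K : ℕ) (e : Fin n → ℝ) (δ : Fin d → ℝ) (u : Fin d' → ℝ)
    (hc : 0 < ∑ i, ((L ^ K).mulVec e) i)
    (hPu : 0 < Real.sqrt (∑ j, (P.mulVec u j) ^ 2))
    (hflip :
      |((∑ i, ((L ^ K).mulVec e) i) * (δ ⬝ᵥ P.mulVec u)) / (n : ℝ)|
        > |u ⬝ᵥ fun j => (1 / (n : ℝ)) * ∑ i, (L ^ K * H * P) i j|) :
    Real.sqrt (∑ i, (δ i) ^ 2)
      > (n : ℝ) * |u ⬝ᵥ fun j => (1 / (n : ℝ)) * ∑ i, (L ^ K * H * P) i j|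
          / ((∑ i, ((L ^ K).mulVec e) i)
              * Real.sqrt (∑ j, (P.mulVec u j) ^ 2)) := by
  set c := ∑ i, ((L ^ K).mulVec e) i with hc'
  set l := u ⬝ᵥ fun j => (1 / (n : ℝ)) * ∑ i, (L ^ K * H * P) i j with hl'
  set A := Real.sqrt (∑ i, (δ i) ^ 2) with hA'
  set B := Real.sqrt (∑ j, (P.mulVec u j) ^ 2) with hB'
  have hnpos : (0 : ℝ) < n := by exact_mod_cast hn
  -- Cauchy–Schwarz
  have hcs : |δ ⬝ᵥ P.mulVec u| ≤ A * B := by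
    have h := Finset.sum_mul_sq_le_sq_mul_sq Finset.univ δ (P.mulVec u)
    have h2 : |δ ⬝ᵥ P.mulVec u| = Real.sqrt ((δ ⬝ᵥ P.mulVec u) ^ 2) := by
      rw [Real.sqrt_sq_eq_abs]
    rw [h2, hA', hB', ← Real.sqrt_mul (Finset.sum_nonneg fun i _ => sq_nonneg _)]
    exact Real.sqrt_le_sqrt h
  have hkey : |l| * n < c * (A * B) := by
    have h1 : |(c * (δ ⬝ᵥ P.mulVec u)) / (n : ℝ)| = c * |δ ⬝ᵥ P.mulVec u| / n := by
      rw [abs_div, abs_mul, abs_of_pos hc, abs_of_pos hnpos]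
    rw [h1] at hflip
    have h2 : |l| * n < c * |δ ⬝ᵥ P.mulVec u| := by
      rw [← lt_div_iff₀ hnpos] at *
      linarith [hflip]
    calc |l| * n < c * |δ ⬝ᵥ P.mulVec u| := h2
      _ ≤ c * (A * B) := by exact mul_le_mul_of_nonneg_left hcs hc.le
  rw [gt_iff_lt, div_lt_iff₀ (mul_pos hc hPu)]
  nlinarith [hkey]
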